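/- In the setting of the extrapolation lemma (upward case γ ∈ (0,∞), α = 1, s = t ∈ [1,∞), r = s', s₀ = t₀ ∈ [1,∞], r₀ = s₀'): given f ∈ L^p_v(Ω) nonzero, define H by H^s w^s = |f|^p v^p. Then on {|f| > 0} the weight v₀ := (H w v^{-1})^{−s/γ} v^{s/s₀} satisfies |f| v₀ ≤ (|f| v)^{p/p₀}, and consequently ‖f v₀‖_{L^{p₀}} ≤ ‖f v‖_{L^p}^{p/p₀}, where 1/p − 1/p₀ = 1/γ. -/

import Mathlib

open MeasureTheory ENNReal

noncomputable def eNorm {Ω : Type*} [MeasurableSpace Ω] (f : Ω → ℝ≥0∞) (s : ℝ≥0∞)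
    (μ : Measure Ω) : ℝ≥0∞ :=
  if s = ∞ then essSup f μ else (∫⁻ x, f x ^ s.toReal ∂μ) ^ s.toReal⁻¹

noncomputable def wChar {Ω : Type*} [MeasurableSpace Ω] (μ : Measure Ω) (𝒰 : Set (Set Ω))
    (w v : Ω → ℝ≥0∞) (s r : ℝ≥0∞) : ℝ≥0∞ :=
  ⨆ U ∈ 𝒰, (μ U) ^ (-(s⁻¹ + r⁻¹).toReal) * eNorm w s (μ.restrict U)
    * eNorm (fun x => (v x)⁻¹) r (μ.restrict U)

noncomputable def maxOp {Ω : Type*} [MeasurableSpace Ω] (μ : Measure Ω) (𝒰 : Set (Set Ω))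
    (f : Ω → ℝ≥0∞) (x : Ω) : ℝ≥0∞ :=
  ⨆ U ∈ 𝒰, ((μ U)⁻¹ * ∫⁻ y in U, f y ∂μ) * Set.indicator U (fun _ => (1 : ℝ≥0∞)) x

def IsBasis {Ω : Type*} [MeasurableSpace Ω] (μ : Measure Ω) (𝒰 : Set (Set Ω)) : Prop :=
  𝒰.Countable ∧ (∀ U ∈ 𝒰, MeasurableSet U ∧ 0 < μ U ∧ μ U < ∞) ∧
    (⋃ U ∈ 𝒰, U) = Set.univ ∧ ∀ x y : Ω, ∃ U ∈ 𝒰, x ∈ U ∧ y ∈ U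

def IsWeight {Ω : Type*} [MeasurableSpace Ω] (w : Ω → ℝ≥0∞) : Prop :=
  Measurable w ∧ ∀ x, 0 < w x ∧ w x < ∞

/-- pointwise step of the extrapolation lemma. Here `σ₀ = 1/s₀ ∈ [0,1]`
(so `σ₀ = 0` corresponds to `s₀ = ∞`), `π₀ = 1/p₀ ∈ [0,∞)` (so the target exponent is
`p₀ = (ofReal π₀)⁻¹`, with `π₀ = 0` giving `p₀ = ∞`), `1/s - σ₀ = 1/p - π₀ = 1/γ`,
`H` is defined by `H^s w^s = f^p v^p`, and
`v₀ = (Hwv⁻¹)^{-s/γ} v^{s/s₀}` satisfies `f·v₀ ≤ (f·v)^{p/p₀}` on `{f > 0}`,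
whence `‖f v₀‖_{L^{p₀}} ≤ ‖f v‖_{L^p}^{p/p₀}`. -/
theorem pointwise_extrapolation_step {Ω : Type*} [MeasurableSpace Ω] (μ : Measure Ω)
    [SigmaFinite μ] (γ s σ₀ p π₀ : ℝ) (hγ : 0 < γ) (hs : 1 ≤ s)
    (hσ₀ : 0 ≤ σ₀) (hσ₀' : σ₀ ≤ 1) (hsγ : 1 / s - σ₀ = 1 / γ)
    (hp : 0 < p) (hπ₀ : 0 ≤ π₀) (hpγ : 1 / p - π₀ = 1 / γ)
    (w v : Ω → ℝ≥0∞) (hw : IsWeight w) (hv : IsWeight v)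
    (f H : Ω → ℝ≥0∞) (hf : Measurable f) (hfne : ∀ x, f x ≠ ∞)
    (hH : ∀ x, H x ^ s * w x ^ s = f x ^ p * v x ^ p) :
    (∀ x, 0 < f x →
      f x * ((H x * w x * (v x)⁻¹) ^ (-(s / γ)) * v x ^ (s * σ₀))
        ≤ (f x * v x) ^ (p * π₀)) ∧
    eNorm (fun x => f x * ((H x * w x * (v x)⁻¹) ^ (-(s / γ)) * v x ^ (s * σ₀)))
        (ENNReal.ofReal π₀)⁻¹ μ
      ≤ (eNorm (fun x => f x * v x) (ENNReal.ofReal p) μ) ^ (p * π₀) := by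
  have hs0 : (0:ℝ) < s := lt_of_lt_of_le one_pos hs
  have hπ : π₀ = 1/p - 1/γ := by linarith
  have hσ : σ₀ = 1/s - 1/γ := by linarith
  have hppi : p * π₀ = 1 - p/γ := by
    rw [hπ]; field_simp
  have key : ∀ x, 0 < f x →
      f x * ((H x * w x * (v x)⁻¹) ^ (-(s / γ)) * v x ^ (s * σ₀))
        = (f x * v x) ^ (p * π₀) := by
    intro x hfx
    have hv0 : v x ≠ 0 := (hv.2 x).1.ne'
    have hvt : v x ≠ ∞ := (hv.2 x).2.ne
    have hf0 : f x ≠ 0 := hfx.ne'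
    have hft : f x ≠ ∞ := hfne x
    have h1 : (H x * w x) ^ s = f x ^ p * v x ^ p := by
      rw [ENNReal.mul_rpow_of_nonneg _ _ hs0.le, hH x]
    have h2 : H x * w x = f x ^ (p * s⁻¹) * v x ^ (p * s⁻¹) := by
      have := congrArg (· ^ s⁻¹) h1
      simpa [← ENNReal.rpow_mul, mul_inv_cancel₀ hs0.ne',
        ENNReal.mul_rpow_of_nonneg _ _ (inv_nonneg.2 hs0.le)] using this
    have h3 : H x * w x * (v x)⁻¹ = f x ^ (p * s⁻¹) * v x ^ (p * s⁻¹ - 1) := by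
      rw [h2, mul_assoc, ← ENNReal.rpow_neg_one (v x),
        ← ENNReal.rpow_add _ _ hv0 hvt]
      ring_nf
    have hfpt : f x ^ (p * s⁻¹) ≠ ∞ := by
      simp [ENNReal.rpow_eq_top_iff, hf0, hft]
    have hvpt : v x ^ (p * s⁻¹ - 1) ≠ ∞ := by
      simp [ENNReal.rpow_eq_top_iff, hv0, hvt]
    have h4 : (H x * w x * (v x)⁻¹) ^ (-(s/γ))
        = f x ^ (-(p/γ)) * v x ^ ((1 - p * s⁻¹) * (s/γ)) := by
      rw [h3, ENNReal.mul_rpow_of_ne_top hfpt hvpt, ← ENNReal.rpow_mul,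
        ← ENNReal.rpow_mul]
      congr 1
      · congr 1; field_simp
      · congr 1; ring
    have hev : (1 - p * s⁻¹) * (s/γ) + s * σ₀ = 1 - p/γ := by
      rw [hσ]; field_simp; ring
    rw [h4, ENNReal.mul_rpow_of_ne_top hft hvt, hppi]
    calc f x * (f x ^ (-(p/γ)) * v x ^ ((1 - p * s⁻¹) * (s/γ)) * v x ^ (s * σ₀))
        = (f x ^ (1:ℝ) * f x ^ (-(p/γ)))
            * (v x ^ ((1 - p * s⁻¹) * (s/γ)) * v x ^ (s * σ₀)) := by
          rw [ENNReal.rpow_one]; ring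
      _ = f x ^ (1 + -(p/γ)) * v x ^ ((1 - p * s⁻¹) * (s/γ) + s * σ₀) := by
          rw [ENNReal.rpow_add _ _ hf0 hft, ENNReal.rpow_add _ _ hv0 hvt]
      _ = f x ^ (1 - p/γ) * v x ^ (1 - p/γ) := by
          rw [hev, sub_eq_add_neg]
  have bound : ∀ x, f x * ((H x * w x * (v x)⁻¹) ^ (-(s / γ)) * v x ^ (s * σ₀))
      ≤ (f x * v x) ^ (p * π₀) := by
    intro x
    rcases eq_or_lt_of_le (zero_le : (0:ℝ≥0∞) ≤ f x) with h | h
    · simp [← h]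
    · exact (key x h).le
  refine ⟨fun x hx => (key x hx).le, ?_⟩
  rcases eq_or_lt_of_le hπ₀ with hπ0 | hπ0
  · subst hπ0
    have he : (ENNReal.ofReal (0:ℝ))⁻¹ = ∞ := by simp
    simp only [eNorm, mul_zero, ENNReal.rpow_zero]
    rw [if_pos he]
    refine essSup_le_of_ae_le (1 : ℝ≥0∞) (Filter.Eventually.of_forall fun x => ?_)
    have := bound x
    rwa [mul_zero, ENNReal.rpow_zero] at this
  · have he : (ENNReal.ofReal π₀)⁻¹ ≠ ∞ := by
      simp [ENNReal.inv_eq_top, ENNReal.ofReal_eq_zero, not_le, hπ0]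
    have htR : ((ENNReal.ofReal π₀)⁻¹).toReal = π₀⁻¹ := by
      rw [ENNReal.toReal_inv, ENNReal.toReal_ofReal hπ₀]
    simp only [eNorm, if_neg he, if_neg ENNReal.ofReal_ne_top, htR,
      ENNReal.toReal_ofReal hp.le, inv_inv]
    rw [← ENNReal.rpow_mul]
    have hpp : p⁻¹ * (p * π₀) = π₀ := by field_simp
    rw [hpp]
    refine ENNReal.rpow_le_rpow (lintegral_mono fun x => ?_) hπ0.le
    calc (f x * ((H x * w x * (v x)⁻¹) ^ (-(s / γ)) * v x ^ (s * σ₀))) ^ π₀⁻¹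
        ≤ ((f x * v x) ^ (p * π₀)) ^ π₀⁻¹ :=
          ENNReal.rpow_le_rpow (bound x) (by positivity)
      _ = (f x * v x) ^ p := by
          rw [← ENNReal.rpow_mul]; congr 1; field_simp
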